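/- arXiv:1611.07105 — 4 statements merged into one kernel-verified Lean document; each statement's English description precedes it below -/
import Mathlib

section
/- Let F be a social choice correspondence on profiles of linear orders over a finite set A with |A| ≥ 3, and suppose F is manipulable by an optimist: there exist a voter i, profiles P = (P_i, P_{−i}) and P' = (P_i', P_{−i}) with F(P) = X, F(P') = Y, and best(P_i, Y) ≻_i best(P_i, X). Then for every family of probability functions p_i assigning each nonempty set W a distribution on W with p_i(best(P_i,W)) > 0 and p_i(worst(P_i,W)) > 0, there exists a utility function u_i : A → ℝ consistent with P_i (u_i(a) > u_i(b) whenever a ≻_i b) such that the expected utility of F(P') under p_i exceeds that of F(P). -/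
/-- The best element of a nonempty finite set under a ballot (a linear order given
as data). -/
def best {A : Type*} (L : LinearOrder A) (W : Finset A) (h : W.Nonempty) : A :=
  @Finset.max' A L W h

/-- The worst element of a nonempty finite set under a ballot. -/
def worst {A : Type*} (L : LinearOrder A) (W : Finset A) (h : W.Nonempty) : A :=
  @Finset.min' A L W h

/-- Strict preference under a ballot: `prefLt L a b` means b ≻ a. -/
def prefLt {A : Type*} (L : LinearOrder A) (a b : A) : Prop := L.lt a b

/-- If F is manipulable by an optimist at voter i (best(P_i, F(P')) ≻_i best(P_i, F(P))),
then for every probability function assigning each nonempty set a distribution with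
positive probability on its best and worst elements under P_i, there is a utility
function consistent with P_i under which the expected utility of F(P') exceeds that
of F(P). -/
theorem stmt_8 {V A : Type*} [Fintype V] [Fintype A] [DecidableEq A]
    (hA : 3 ≤ Fintype.card A)
    (F : (V → LinearOrder A) → Finset A) (hF : ∀ P, (F P).Nonempty)
    (i : V) (P P' : V → LinearOrder A)
    (hagree : ∀ j, j ≠ i → P j = P' j)
    (hman : prefLt (P i) (best (P i) (F P) (hF P)) (best (P i) (F P') (hF P')))
    (p : Finset A → A → ℝ)
    (hp0 : ∀ W, ∀ x ∈ W, 0 ≤ p W x)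
    (hp1 : ∀ W : Finset A, W.Nonempty → ∑ x ∈ W, p W x = 1)
    (hpbest : ∀ (W : Finset A) (h : W.Nonempty), 0 < p W (best (P i) W h))
    (hpworst : ∀ (W : Finset A) (h : W.Nonempty), 0 < p W (worst (P i) W h)) :
    ∃ u : A → ℝ, (∀ a b : A, prefLt (P i) b a → u b < u a) ∧
      ∑ x ∈ F P, p (F P) x * u x < ∑ y ∈ F P', p (F P') y * u y := by
  letI L : LinearOrder A := P i
  set X := F P with hXdef
  set Y := F P' with hYdef
  set b := best (P i) X (hF P) with hbdef
  set c := best (P i) Y (hF P') with hcdef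
  have hbc : b < c := hman
  have hpc : 0 < p Y c := hpbest Y (hF P')
  set N : ℝ := (Fintype.card A : ℝ) with hN
  set M : ℝ := (N + 1) / p Y c with hM
  have hNpos : 0 ≤ N := by positivity
  have hMpos : 0 ≤ M := by
    apply div_nonneg _ hpc.le
    linarith
  classical
  set u0 : A → ℝ := fun x => ((Finset.univ.filter (fun y => y ≤ x)).card : ℝ) with hu0
  set u : A → ℝ := fun x => u0 x + (if b < x then M else 0) with hu
  have hu0mono : ∀ a b : A, a < b → u0 a < u0 b := by
    intro a b hab
    have hss : (Finset.univ.filter (fun y => y ≤ a)) ⊂ (Finset.univ.filter (fun y => y ≤ b)) := by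
      constructor
      · intro y hy
        simp only [Finset.mem_filter, Finset.mem_univ, true_and] at hy ⊢
        exact le_trans hy hab.le
      · intro hsub
        have hb := hsub (by simp : b ∈ Finset.univ.filter (fun y => y ≤ b))
        simp only [Finset.mem_filter, Finset.mem_univ, true_and] at hb
        exact absurd hb (not_le_of_gt hab)
    have := Finset.card_lt_card hss
    simp only [hu0]
    exact_mod_cast this
  have hu0nonneg : ∀ x, 0 ≤ u0 x := fun x => by positivity
  have hu0le : ∀ x, u0 x ≤ N := by
    intro x
    have : (Finset.univ.filter (fun y => y ≤ x)).card ≤ Fintype.card A := by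
      simpa using Finset.card_filter_le Finset.univ (fun y => y ≤ x)
    simp only [hu0, hN]
    exact_mod_cast this
  refine ⟨u, ?_, ?_⟩
  · intro a b' hba
    have hlt : b' < a := hba
    have h1 : u0 b' < u0 a := hu0mono _ _ hlt
    have h2 : (if b < b' then M else 0) ≤ (if b < a then M else 0) := by
      by_cases hb' : b < b'
      · rw [if_pos hb', if_pos (lt_trans hb' hlt)]
      · rw [if_neg hb']
        by_cases ha : b < a
        · rw [if_pos ha]; exact hMpos
        · rw [if_neg ha]
      
    simp only [hu]
    linarith
  · have hXle : ∑ x ∈ X, p X x * u x ≤ N := by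
      calc ∑ x ∈ X, p X x * u x ≤ ∑ x ∈ X, p X x * N := by
            apply Finset.sum_le_sum
            intro x hx
            apply mul_le_mul_of_nonneg_left _ (hp0 X x hx)
            have hxb : x ≤ b := Finset.le_max' X x hx
            have : ¬ b < x := not_lt_of_ge hxb
            simp only [hu, this, if_false, add_zero]
            exact hu0le x
        _ = N := by rw [← Finset.sum_mul, hp1 X (hF P), one_mul]
    have hYge : N + 1 ≤ ∑ y ∈ Y, p Y y * u y := by
      have hcY : c ∈ Y := Finset.max'_mem _ _
      have hunn : ∀ y ∈ Y, 0 ≤ p Y y * u y := by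
        intro y hy
        apply mul_nonneg (hp0 Y y hy)
        simp only [hu]
        by_cases h : b < y
        · rw [if_pos h]; linarith [hu0nonneg y]
        · rw [if_neg h]; simpa using hu0nonneg y
      have hsingle : p Y c * u c ≤ ∑ y ∈ Y, p Y y * u y :=
        Finset.single_le_sum hunn hcY
      have huc : M ≤ u c := by
        simp only [hu, if_pos hbc]
        linarith [hu0nonneg c]
      have : N + 1 ≤ p Y c * u c := by
        have h1 : p Y c * M ≤ p Y c * u c := mul_le_mul_of_nonneg_left huc hpc.le
        have h2 : p Y c * M = N + 1 := by
          rw [hM, mul_div_cancel₀ _ (ne_of_gt hpc)]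
        linarith
      linarith
    linarith
end

section
/- Let F be a social choice correspondence on profiles of linear orders over a finite set A, and suppose F is manipulable by a pessimist: there exist a voter i, profiles P = (P_i, P_{−i}) and P' = (P_i', P_{−i}) with F(P) = X, F(P') = Y, and worst(P_i, Y) ≻_i worst(P_i, X). Then for every probability function p_i assigning to each nonempty W ⊆ A a distribution on W with positive probability on best(P_i,W) and worst(P_i,W), there exists a utility function u_i consistent with P_i such that ∑_{y∈Y} p_i(y)·u_i(y) > ∑_{x∈X} p_i(x)·u_i(x). -/
/-- If F is manipulable by a pessimist at voter i (worst(P_i, F(P')) ≻_i worst(P_i, F(P))),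
then for every probability function assigning each nonempty set a distribution with
positive probability on its best and worst elements under P_i, there is a utility
function consistent with P_i under which the expected utility of F(P') exceeds that
of F(P). -/
theorem stmt_9 {V A : Type*} [Fintype V] [Fintype A] [DecidableEq A]
    (F : (V → LinearOrder A) → Finset A) (hF : ∀ P, (F P).Nonempty)
    (i : V) (P P' : V → LinearOrder A)
    (hagree : ∀ j, j ≠ i → P j = P' j)
    (hman : prefLt (P i) (worst (P i) (F P) (hF P)) (worst (P i) (F P') (hF P')))
    (p : Finset A → A → ℝ)
    (hp0 : ∀ W, ∀ x ∈ W, 0 ≤ p W x)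
    (hp1 : ∀ W : Finset A, W.Nonempty → ∑ x ∈ W, p W x = 1)
    (hpbest : ∀ (W : Finset A) (h : W.Nonempty), 0 < p W (best (P i) W h))
    (hpworst : ∀ (W : Finset A) (h : W.Nonempty), 0 < p W (worst (P i) W h)) :
    ∃ u : A → ℝ, (∀ a b : A, prefLt (P i) b a → u b < u a) ∧
      ∑ x ∈ F P, p (F P) x * u x < ∑ y ∈ F P', p (F P') y * u y := by
  letI : LinearOrder A := P i
  set w : A := worst (P i) (F P) (hF P) with hw
  set w' : A := worst (P i) (F P') (hF P') with hw'
  have hww' : w < w' := hman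
  have hwmem : w ∈ F P := Finset.min'_mem _ _
  -- rank function
  set r : A → ℝ := fun a => ((Finset.univ.filter (fun b => b < a)).card : ℝ) with hrdef
  have hr : ∀ a b : A, b < a → r b < r a := by
    intro a b hba
    have hsub : Finset.univ.filter (fun x => x < b) ⊂ Finset.univ.filter (fun x => x < a) := by
      rw [Finset.ssubset_def]
      constructor
      · intro x hx
        simp only [Finset.mem_filter, Finset.mem_univ, true_and] at *
        exact hx.trans hba
      · intro hcon
        have hb : b ∈ Finset.univ.filter (fun x => x < a) := by simpa using hba
        have := hcon hb
        simp at this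
    have := Finset.card_lt_card hsub
    simp only [hrdef]
    exact_mod_cast this
  set c : ℝ := p (F P) w with hcdef
  have hc : 0 < c := hpworst (F P) (hF P)
  set S1 : ℝ := ∑ x ∈ F P, p (F P) x * r x with hS1
  set S2 : ℝ := ∑ y ∈ F P', p (F P') y * r y with hS2
  set M : ℝ := max 0 ((S1 - S2) / c) + 1 with hM
  have hM0 : 0 < M := by
    rw [hM]
    have : (0:ℝ) ≤ max 0 ((S1 - S2) / c) := le_max_left _ _
    linarith
  have hMc : S1 - M * c < S2 := by
    have h1 : (S1 - S2) / c < M := by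
      rw [hM]
      have : (S1 - S2) / c ≤ max 0 ((S1 - S2) / c) := le_max_right _ _
      linarith
    have := (div_lt_iff₀ hc).mp h1
    linarith
  refine ⟨fun a => r a - (if a < w' then M else 0), ?_, ?_⟩
  · intro a b hba
    have hba' : b < a := hba
    by_cases hb : b < w'
    · by_cases ha : a < w'
      · simp only [if_pos hb, if_pos ha]
        have := hr a b hba'
        linarith
      · simp only [if_pos hb, if_neg ha]
        have := hr a b hba'
        linarith
    · have ha : ¬ a < w' := fun ha => hb (hba'.trans ha)
      simp only [if_neg hb, if_neg ha]
      have := hr a b hba'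
      linarith
  · have hrhs : ∑ y ∈ F P', p (F P') y * (r y - (if y < w' then M else 0)) = S2 := by
      apply Finset.sum_congr rfl
      intro y hy
      have : ¬ y < w' := not_lt.mpr (Finset.min'_le _ _ hy)
      simp [this]
    rw [hrhs]
    have hlhs : ∑ x ∈ F P, p (F P) x * (r x - (if x < w' then M else 0))
        = S1 - ∑ x ∈ F P, p (F P) x * (if x < w' then M else 0) := by
      rw [← Finset.sum_sub_distrib]
      apply Finset.sum_congr rfl
      intro x _
      ring
    rw [hlhs]
    have hT : M * c ≤ ∑ x ∈ F P, p (F P) x * (if x < w' then M else 0) := by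
      have hterm : p (F P) w * (if w < w' then M else 0) = M * c := by
        rw [if_pos hww', hcdef]; ring
      calc M * c = p (F P) w * (if w < w' then M else 0) := hterm.symm
        _ ≤ ∑ x ∈ F P, p (F P) x * (if x < w' then M else 0) := by
          apply Finset.single_le_sum (f := fun x => p (F P) x * (if x < w' then M else 0)) _ hwmem
          intro x hx
          have := hp0 (F P) x hx
          by_cases hxw : x < w' <;> simp [hxw] <;> positivity
    linarith
end

section
/- Let F be a social choice correspondence over a finite set A. Define the half-half probability functions p_i that assign probability 1/2 each to best(P_i, W) and worst(P_i, W) when these differ, and probability 1 when they coincide. If F is strategy-proof for optimists and strategy-proof for pessimists, then no voter can profitably manipulate in expected utility under these p_i for any utility function consistent with their ballot. -/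
/-- Weak preference under a ballot. -/
def prefLe {A : Type*} (L : LinearOrder A) (a b : A) : Prop := L.le a b

/-- The half-half probability function: probability 1/2 each on the best and worst
elements of W under the ballot L when they differ, probability 1 when they coincide. -/
noncomputable def halfHalf {A : Type*} [DecidableEq A] (L : LinearOrder A)
    (W : Finset A) (h : W.Nonempty) (x : A) : ℝ :=
  if best L W h = worst L W h then (if x = best L W h then 1 else 0)
  else if x = best L W h ∨ x = worst L W h then 1 / 2 else 0

lemma halfHalf_sum {A : Type*} [DecidableEq A] (L : LinearOrder A)
    (W : Finset A) (h : W.Nonempty) (u : A → ℝ) :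
    ∑ y ∈ W, halfHalf L W h y * u y = (u (best L W h) + u (worst L W h)) / 2 := by
  have hb : best L W h ∈ W := @Finset.max'_mem A L W h
  have hw : worst L W h ∈ W := @Finset.min'_mem A L W h
  by_cases heq : best L W h = worst L W h
  · have : ∑ y ∈ W, halfHalf L W h y * u y = u (best L W h) := by
      simp only [halfHalf, if_pos heq, ite_mul, one_mul, zero_mul]
      rw [Finset.sum_ite_eq' W (best L W h) u]
      simp [hb]
    rw [this, ← heq]; ring
  · have key : ∀ y ∈ W, halfHalf L W h y * u y =
        (if y = best L W h then u y / 2 else 0) +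
        (if y = worst L W h then u y / 2 else 0) := by
      intro y _
      simp only [halfHalf, if_neg heq]
      by_cases h1 : y = best L W h
      · have h2 : y ≠ worst L W h := by rw [h1]; exact heq
        simp [h1, h2, heq]; ring
      · by_cases h2 : y = worst L W h
        · simp [h1, h2, Ne.symm heq]; ring
        · simp [h1, h2]
    rw [Finset.sum_congr rfl key, Finset.sum_add_distrib,
      Finset.sum_ite_eq' W (best L W h) (fun y => u y / 2),
      Finset.sum_ite_eq' W (worst L W h) (fun y => u y / 2)]
    simp [hb, hw]; ring

/-- If F is strategy-proof for optimists and for pessimists, then under the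
half-half probability functions no voter can profitably manipulate in expected
utility, for any utility function consistent with their ballot. -/
theorem stmt_10 {V A : Type*} [Fintype V] [Fintype A] [DecidableEq A]
    (F : (V → LinearOrder A) → Finset A) (hF : ∀ P, (F P).Nonempty)
    (SPO : ∀ (i : V) (P P' : V → LinearOrder A), (∀ j, j ≠ i → P j = P' j) →
      prefLe (P i) (best (P i) (F P') (hF P')) (best (P i) (F P) (hF P)))
    (SPP : ∀ (i : V) (P P' : V → LinearOrder A), (∀ j, j ≠ i → P j = P' j) →
      prefLe (P i) (worst (P i) (F P') (hF P')) (worst (P i) (F P) (hF P))) :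
    ∀ (i : V) (P P' : V → LinearOrder A), (∀ j, j ≠ i → P j = P' j) →
      ∀ u : A → ℝ, (∀ a b : A, prefLt (P i) b a → u b < u a) →
        ∑ y ∈ F P', halfHalf (P i) (F P') (hF P') y * u y ≤
          ∑ x ∈ F P, halfHalf (P i) (F P) (hF P) x * u x := by
  intro i P P' hj u hu
  rw [halfHalf_sum, halfHalf_sum]
  have hmono : ∀ a b : A, prefLe (P i) a b → u a ≤ u b := by
    intro a b hab
    rcases (@eq_or_lt_of_le A (P i).toPartialOrder a b hab) with rfl | hlt
    · exact le_refl _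
    · exact le_of_lt (hu b a hlt)
  have h1 := hmono _ _ (SPO i P P' hj)
  have h2 := hmono _ _ (SPP i P P' hj)
  linarith
end

section
/- A social choice correspondence F is manipulable in the sense of Taylor (by an optimist or a pessimist) if and only if for every family of probability functions p_i (assigning each set W a distribution supported with positive probability on its best and worst elements under P_i) there exists a voter i, a utility function u_i consistent with P_i, and profiles (P_i, P_{−i}), (P_i', P_{−i}) such that the expected utility of F(P_i' P_{−i}) strictly exceeds that of F(P_i P_{−i}). -/
section Aux

lemma key_lemma {A : Type*} [Fintype A] [LinearOrder A] (c : A) (T T' : Finset A)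
    (q q' : A → ℝ) (hq0 : ∀ x ∈ T, 0 ≤ q x) (hq'0 : ∀ y ∈ T', 0 ≤ q' y)
    (hq1 : ∑ x ∈ T, q x = 1) (ε : ℝ) (hε : 0 < ε)
    (hgap : (∑ x ∈ T, q x * (if c < x then 1 else 0)) + ε ≤
      ∑ y ∈ T', q' y * (if c < y then 1 else 0)) :
    ∃ u : A → ℝ, (∀ a b : A, b < a → u b < u a) ∧
      ∑ x ∈ T, q x * u x < ∑ y ∈ T', q' y * u y := by
  classical
  set N : ℝ := (Fintype.card A : ℝ)
  set r : A → ℝ := fun x => ((Finset.univ.filter fun y => y < x).card : ℝ) with hr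
  have hrmono : ∀ a b : A, a < b → r a < r b := by
    intro a b hab
    have hss : (Finset.univ.filter fun y => y < a) ⊂ (Finset.univ.filter fun y => y < b) := by
      constructor
      · intro y hy
        simp only [Finset.mem_filter, Finset.mem_univ, true_and] at *
        exact lt_trans hy hab
      · intro hsub
        have := hsub (by simp [hab] : a ∈ Finset.univ.filter fun y => y < b)
        simp at this
    simp only [hr]
    exact_mod_cast Finset.card_lt_card hss
  have hr0 : ∀ x, 0 ≤ r x := fun x => by positivity
  have hrle : ∀ x, r x ≤ N := fun x => by
    have := Finset.card_filter_le Finset.univ (fun y => y < x)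
    simp only [hr, N, ← Finset.card_univ]
    exact_mod_cast this
  set M : ℝ := (N + 1) / ε with hM
  have hM0 : 0 ≤ M := le_of_lt (by positivity)
  have hMε : M * ε = N + 1 := div_mul_cancel₀ _ (ne_of_gt hε)
  refine ⟨fun x => r x + M * (if c < x then 1 else 0), ?_, ?_⟩
  · intro a b hba
    dsimp only
    have hind : (if c < b then (1:ℝ) else 0) ≤ (if c < a then 1 else 0) := by
      by_cases h : c < b
      · simp [h, lt_trans h hba]
      · by_cases h' : c < a <;> simp [h, h']
    have := mul_le_mul_of_nonneg_left hind hM0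
    have := hrmono b a hba
    linarith
  · have expand : ∀ (S : Finset A) (f : A → ℝ),
        ∑ x ∈ S, f x * (r x + M * (if c < x then 1 else 0)) =
        (∑ x ∈ S, f x * r x) + M * ∑ x ∈ S, f x * (if c < x then 1 else 0) := by
      intro S f
      rw [Finset.mul_sum, ← Finset.sum_add_distrib]
      congr 1; ext x; ring
    rw [expand, expand]
    have h1 : ∑ x ∈ T, q x * r x ≤ N := by
      calc ∑ x ∈ T, q x * r x ≤ ∑ x ∈ T, q x * N := by
            apply Finset.sum_le_sum
            intro x hx
            exact mul_le_mul_of_nonneg_left (hrle x) (hq0 x hx)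
        _ = N := by rw [← Finset.sum_mul, hq1, one_mul]
    have h2 : 0 ≤ ∑ y ∈ T', q' y * r y :=
      Finset.sum_nonneg fun y hy => mul_nonneg (hq'0 y hy) (hr0 y)
    have h3 := mul_le_mul_of_nonneg_left hgap hM0
    nlinarith [hMε]
end Aux

/-- A social choice correspondence F is manipulable in the sense of Taylor
(by an optimist or a pessimist) iff for every family of probability functions
(assigning, at each profile, to each nonempty set a distribution with positive
probability on its best and worst elements under the voter's ballot) there exist a
voter i, a utility function consistent with P_i, and profiles differing only in i's
ballot such that the expected utility of F(P') strictly exceeds that of F(P). -/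
theorem stmt_11 {V A : Type*} [Fintype V] [Fintype A] [DecidableEq A]
    (hA : 3 ≤ Fintype.card A)
    (F : (V → LinearOrder A) → Finset A) (hF : ∀ P, (F P).Nonempty) :
    (∃ (i : V) (P P' : V → LinearOrder A), (∀ j, j ≠ i → P j = P' j) ∧
        (prefLt (P i) (best (P i) (F P) (hF P)) (best (P i) (F P') (hF P')) ∨
         prefLt (P i) (worst (P i) (F P) (hF P)) (worst (P i) (F P') (hF P')))) ↔
    (∀ p : V → (V → LinearOrder A) → Finset A → A → ℝ,
        (∀ i P W, ∀ x ∈ W, 0 ≤ p i P W x) →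
        (∀ i P (W : Finset A), W.Nonempty → ∑ x ∈ W, p i P W x = 1) →
        (∀ i P (W : Finset A) (h : W.Nonempty), 0 < p i P W (best (P i) W h)) →
        (∀ i P (W : Finset A) (h : W.Nonempty), 0 < p i P W (worst (P i) W h)) →
        ∃ (i : V) (P P' : V → LinearOrder A), (∀ j, j ≠ i → P j = P' j) ∧
          ∃ u : A → ℝ, (∀ a b : A, prefLt (P i) b a → u b < u a) ∧
            ∑ x ∈ F P, p i P (F P) x * u x < ∑ y ∈ F P', p i P (F P') y * u y) := by
  constructor
  · -- Taylor manipulable → DS manipulable for every probability family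
    rintro ⟨i, P, P', hdiff, hman⟩ p hp0 hp1 hbest hworst
    refine ⟨i, P, P', hdiff, ?_⟩
    letI : LinearOrder A := P i
    set q : A → ℝ := p i P (F P) with hq
    set q' : A → ℝ := p i P (F P') with hq'
    have hq0 : ∀ x ∈ F P, 0 ≤ q x := fun x hx => hp0 i P (F P) x hx
    have hq'0 : ∀ y ∈ F P', 0 ≤ q' y := fun y hy => hp0 i P (F P') y hy
    have hq1 : ∑ x ∈ F P, q x = 1 := hp1 i P (F P) (hF P)
    have hq'1 : ∑ y ∈ F P', q' y = 1 := hp1 i P (F P') (hF P')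
    rcases hman with hopt | hpes
    · -- optimist case
      set b : A := best (P i) (F P) (hF P) with hb
      set b' : A := best (P i) (F P') (hF P') with hb'
      have hlt : b < b' := hopt
      have hεpos : 0 < q' b' := hbest i P (F P') (hF P')
      have hgap : (∑ x ∈ F P, q x * (if b < x then 1 else 0)) + q' b' ≤
          ∑ y ∈ F P', q' y * (if b < y then 1 else 0) := by
        have hS : ∑ x ∈ F P, q x * (if b < x then (1:ℝ) else 0) = 0 := by
          apply Finset.sum_eq_zero
          intro x hx
          have : x ≤ b := Finset.le_max' (F P) x hx
          rw [if_neg (not_lt.mpr this), mul_zero]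
        have hb'mem : b' ∈ F P' := Finset.max'_mem (F P') (hF P')
        have hS' : q' b' * 1 ≤ ∑ y ∈ F P', q' y * (if b < y then 1 else 0) := by
          have : q' b' * (if b < b' then (1:ℝ) else 0) ≤
              ∑ y ∈ F P', q' y * (if b < y then 1 else 0) := by
            apply Finset.single_le_sum (f := fun y => q' y * (if b < y then (1:ℝ) else 0))
            · intro y hy
              have := hq'0 y hy
              positivity
            · exact hb'mem
          rwa [if_pos hlt] at this
        rw [hS, zero_add]
        simpa using hS'
      exact key_lemma b (F P) (F P') q q' hq0 hq'0 hq1 (q' b') hεpos hgap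
    · -- pessimist case
      set w : A := worst (P i) (F P) (hF P) with hw
      set w' : A := worst (P i) (F P') (hF P') with hw'
      have hlt : w < w' := hpes
      have hεpos : 0 < q w := hworst i P (F P) (hF P)
      have hwmem : w ∈ F P := Finset.min'_mem (F P) (hF P)
      have hgap : (∑ x ∈ F P, q x * (if w < x then 1 else 0)) + q w ≤
          ∑ y ∈ F P', q' y * (if w < y then 1 else 0) := by
        have hS' : ∑ y ∈ F P', q' y * (if w < y then (1:ℝ) else 0) = 1 := by
          have heq : ∑ y ∈ F P', q' y * (if w < y then (1:ℝ) else 0) = ∑ y ∈ F P', q' y := by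
            apply Finset.sum_congr rfl
            intro y hy
            have hle : w' ≤ y := Finset.min'_le (F P') y hy
            rw [if_pos (lt_of_lt_of_le hlt hle), mul_one]
          rw [heq, hq'1]
        have hS : ∑ x ∈ F P, q x * (if w < x then (1:ℝ) else 0) ≤ 1 - q w := by
          have step1 : ∑ x ∈ F P, q x * (if w < x then (1:ℝ) else 0) ≤
              ∑ x ∈ F P, (q x - if x = w then q x else 0) := by
            apply Finset.sum_le_sum
            intro x hx
            by_cases hxw : x = w
            · subst hxw
              simp
            · rw [if_neg hxw, sub_zero]
              by_cases h : w < x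
              · rw [if_pos h, mul_one]
              · rw [if_neg h, mul_zero]
                exact hq0 x hx
          have step2 : ∑ x ∈ F P, (q x - if x = w then q x else 0) = 1 - q w := by
            rw [Finset.sum_sub_distrib, hq1, Finset.sum_ite_eq' (F P) w q, if_pos hwmem]
          linarith
        linarith
      exact key_lemma w (F P) (F P') q q' hq0 hq'0 hq1 (q w) hεpos hgap
  · -- DS manipulable for every family → Taylor manipulable
    intro h
    classical
    set p : V → (V → LinearOrder A) → Finset A → A → ℝ := fun i P W x =>
      if hW : W.Nonempty then
        (if x = best (P i) W hW then (1:ℝ)/2 else 0) +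
        (if x = worst (P i) W hW then (1:ℝ)/2 else 0)
      else 0 with hp
    have hp0 : ∀ i P W, ∀ x ∈ W, 0 ≤ p i P W x := by
      intro i P W x hx
      simp only [hp]
      split
      · split <;> split <;> norm_num
      · exact le_refl 0
    have hsum : ∀ i P (W : Finset A), W.Nonempty → ∑ x ∈ W, p i P W x = 1 := by
      intro i P W hW
      have hmb : best (P i) W hW ∈ W := @Finset.max'_mem A (P i) W hW
      have hmw : worst (P i) W hW ∈ W := @Finset.min'_mem A (P i) W hW
      simp only [hp, dif_pos hW]
      rw [Finset.sum_add_distrib, Finset.sum_ite_eq' W _ (fun _ => (1:ℝ)/2),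
        Finset.sum_ite_eq' W _ (fun _ => (1:ℝ)/2), if_pos hmb, if_pos hmw]
      norm_num
    have hpb : ∀ i P (W : Finset A) (hW : W.Nonempty), 0 < p i P W (best (P i) W hW) := by
      intro i P W hW
      simp only [hp, dif_pos hW, if_pos rfl]
      by_cases hbw : best (P i) W hW = worst (P i) W hW
      · rw [if_pos hbw]; norm_num
      · rw [if_neg hbw]; norm_num
    have hpw : ∀ i P (W : Finset A) (hW : W.Nonempty), 0 < p i P W (worst (P i) W hW) := by
      intro i P W hW
      simp only [hp, dif_pos hW, if_true]
      by_cases hbw : worst (P i) W hW = best (P i) W hW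
      · rw [if_pos hbw]; norm_num
      · rw [if_neg hbw]; norm_num
    obtain ⟨i, P, P', hdiff, u, hu, hlt⟩ := h p hp0 hsum hpb hpw
    refine ⟨i, P, P', hdiff, ?_⟩
    letI : LinearOrder A := P i
    set b : A := best (P i) (F P) (hF P) with hb
    set b' : A := best (P i) (F P') (hF P') with hb'
    set w : A := worst (P i) (F P) (hF P) with hw
    set w' : A := worst (P i) (F P') (hF P') with hw'
    have hcalc : ∀ (T : Finset A) (hT : T.Nonempty),
        ∑ x ∈ T, p i P T x * u x =
          u (best (P i) T hT) / 2 + u (worst (P i) T hT) / 2 := by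
      intro T hT
      have hmb : best (P i) T hT ∈ T := @Finset.max'_mem A (P i) T hT
      have hmw : worst (P i) T hT ∈ T := @Finset.min'_mem A (P i) T hT
      simp only [hp, dif_pos hT, add_mul, ite_mul, zero_mul, one_mul]
      rw [Finset.sum_add_distrib,
        Finset.sum_ite_eq' T _ (fun x => (1:ℝ)/2 * u x),
        Finset.sum_ite_eq' T _ (fun x => (1:ℝ)/2 * u x),
        if_pos hmb, if_pos hmw]
      ring
    rw [hcalc (F P) (hF P), hcalc (F P') (hF P')] at hlt
    rcases lt_or_ge b b' with h1 | h1
    · exact Or.inl h1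
    · rcases lt_or_ge w w' with h2 | h2
      · exact Or.inr h2
      · exfalso
        have hub : u b' ≤ u b := by
          rcases lt_or_eq_of_le h1 with h | h
          · exact le_of_lt (hu b b' h)
          · rw [h]
        have huw : u w' ≤ u w := by
          rcases lt_or_eq_of_le h2 with h | h
          · exact le_of_lt (hu w w' h)
          · rw [h]
        rw [← hb, ← hb', ← hw, ← hw'] at hlt
        linarith
end
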